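/- (Few inter-group hash collisions.) Fix δ₁ ∈ (0,1) and a number of hash buckets t. For distinct j, j' ∈ [q], let E_{j,j'} be the event that the number of buckets m ∈ [t] containing both some index of G_j and some index of G_{j'} under h is at most n_j·n_{j'}·q²/(t·δ₁). Then Pr[∩_{j ≠ j'} E_{j,j'}] ≥ 1 − δ₁. -/

import Mathlib

open Matrix Finset Real

noncomputable section

/-- Leverage scores: squared Euclidean norms of the rows of `U`. -/
def lev {n r : ℕ} (U : Matrix (Fin n) (Fin r) ℝ) (i : Fin n) : ℝ := ∑ k, U i k ^ 2

/-- The dyadic leverage-score group `G_j` (here `j : ℕ` is the 0-based index, so it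
corresponds to the paper's group `G_{j+1} = {i : 2^{−(j+1)} < u_i ≤ 2^{−j}}`). -/
def grp {n r : ℕ} (U : Matrix (Fin n) (Fin r) ℝ) (j : ℕ) : Set (Fin n) :=
  {i | (2 : ℝ) ^ (-(j : ℤ) - 1) < lev U i ∧ lev U i ≤ (2 : ℝ) ^ (-(j : ℤ))}

/-- Distinct dyadic groups are disjoint. -/
lemma grp_disjoint {n r : ℕ} (U : Matrix (Fin n) (Fin r) ℝ) {j j' : ℕ} (hjj : j ≠ j')
    {i : Fin n} (h1 : i ∈ grp U j) (h2 : i ∈ grp U j') : False := by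
  wlog hlt : j < j' generalizing j j'
  · exact this hjj.symm h2 h1 (by omega)
  have hle : (2 : ℝ) ^ (-(j' : ℤ)) ≤ (2 : ℝ) ^ (-(j : ℤ) - 1) :=
    zpow_le_zpow_right₀ one_le_two (by omega)
  exact absurd (h2.2.trans hle) (not_le.mpr h1.1)

/-- Counting functions with a prescribed collision. -/
lemma card_collision (n t : ℕ) (a b : Fin n) (hab : a ≠ b) [DecidableEq (Fin n → Fin t)] :
    (Finset.univ.filter (fun h : Fin n → Fin t => h a = h b)).card * t = t ^ n := by
  classical
  have e : {h : Fin n → Fin t // h a = h b} × Fin t ≃ (Fin n → Fin t) :=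
    { toFun := fun p => Function.update p.1.1 b p.2
      invFun := fun g => (⟨Function.update g b (g a), by
        simp [Function.update_of_ne hab, Function.update_self]⟩, g b)
      left_inv := by
        rintro ⟨⟨h, hh⟩, v⟩
        ext1
        · simp only [Subtype.mk.injEq]
          funext x
          by_cases hx : x = b
          · subst hx; simp [Function.update_of_ne hab, Function.update_self, hh]
          · simp [Function.update_of_ne hx]
        · simp
      right_inv := by
        intro g
        funext x
        by_cases hx : x = b
        · subst hx; simp
        · simp [Function.update_of_ne hx] }
  have := Fintype.card_congr e
  simpa [Fintype.card_subtype] using this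

/-- **Few inter-group hash collisions.** With probability at least `1 − δ₁` over a
uniformly random `h : [n] → [t]`, for every pair of distinct groups `G_j, G_{j'}`,
the number of buckets containing indices of both groups is at most
`n_j·n_{j'}·q²/(t·δ₁)`. -/
theorem few_inter_group_collisions
    (n d r t q : ℕ) (ht : 0 < t)
    (A : Matrix (Fin n) (Fin d) ℝ) (U : Matrix (Fin n) (Fin r) ℝ)
    (hrank : A.rank = r) (horth : Uᵀ * U = 1)
    (hspan : ∀ y : Fin n → ℝ, y ∈ Set.range A.mulVec ↔ y ∈ Set.range U.mulVec)
    (T : ℝ) (hT : 0 < T) (hq : q = ⌈Real.logb 2 (1 / T)⌉₊)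
    (δ₁ : ℝ) (hδ : 0 < δ₁) (hδ' : δ₁ < 1) :
    (1 - δ₁) * (Fintype.card (Fin n → Fin t)) ≤
      Nat.card {h : Fin n → Fin t //
        ∀ j j' : Fin q, j ≠ j' →
          (Nat.card {m : Fin t //
              (∃ i ∈ grp U (j : ℕ), h i = m) ∧ (∃ i' ∈ grp U (j' : ℕ), h i' = m)} : ℝ) ≤
            (grp U (j : ℕ)).ncard * (grp U (j' : ℕ)).ncard * q ^ 2 / (t * δ₁)} := by
  classical
  -- group finsets
  set G : ℕ → Finset (Fin n) := fun j => Finset.univ.filter (· ∈ grp U j) with hGdef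
  have hGcoe : ∀ j : ℕ, grp U j = ↑(G j) := by
    intro j; ext i; simp [hGdef]
  have hGcard : ∀ j : ℕ, (grp U j).ncard = (G j).card := by
    intro j; rw [hGcoe j, Set.ncard_coe_finset]
  -- the collision-pair count
  set cnt : Fin q → Fin q → (Fin n → Fin t) → ℕ := fun j j' h =>
    (((G (j : ℕ)) ×ˢ (G (j' : ℕ))).filter (fun p => h p.1 = h p.2)).card with hcnt
  -- bucket count is at most pair count
  have hbucket : ∀ (j j' : Fin q) (h : Fin n → Fin t),
      Nat.card {m : Fin t //
        (∃ i ∈ grp U (j : ℕ), h i = m) ∧ (∃ i' ∈ grp U (j' : ℕ), h i' = m)} ≤ cnt j j' h := by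
    intro j j' h
    rw [Nat.card_eq_fintype_card, Fintype.card_subtype]
    have hsub : Finset.univ.filter (fun m : Fin t =>
        (∃ i ∈ grp U (j : ℕ), h i = m) ∧ (∃ i' ∈ grp U (j' : ℕ), h i' = m)) ⊆
        (((G (j : ℕ)) ×ˢ (G (j' : ℕ))).filter (fun p => h p.1 = h p.2)).image
          (fun p => h p.1) := by
      intro m hm
      simp only [Finset.mem_filter, Finset.mem_univ, true_and] at hm
      obtain ⟨⟨i, hi, hhi⟩, ⟨i', hi', hhi'⟩⟩ := hm
      refine Finset.mem_image.mpr ⟨(i, i'), ?_, hhi⟩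
      simp [Finset.mem_filter, Finset.mem_product, hGdef, hi, hi', hhi, hhi']
    calc _ ≤ _ := Finset.card_le_card hsub
      _ ≤ cnt j j' h := Finset.card_image_le
  -- expected count
  have hsum : ∀ j j' : Fin q, j ≠ j' →
      (∑ h : Fin n → Fin t, cnt j j' h) * t = (G (j:ℕ)).card * (G (j':ℕ)).card * t ^ n := by
    intro j j' hjj
    have hne : ∀ p ∈ (G (j:ℕ)) ×ˢ (G (j':ℕ)), p.1 ≠ p.2 := by
      intro p hp heq
      rw [Finset.mem_product] at hp
      refine grp_disjoint U (j := (j:ℕ)) (j' := (j':ℕ))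
        (fun hv => hjj (Fin.val_injective hv))
        (i := p.1) (by simpa [hGdef] using hp.1) ?_
      rw [heq]
      simpa [hGdef] using hp.2
    calc (∑ h : Fin n → Fin t, cnt j j' h) * t
        = (∑ p ∈ (G (j:ℕ)) ×ˢ (G (j':ℕ)),
            (Finset.univ.filter (fun h : Fin n → Fin t => h p.1 = h p.2)).card) * t := by
          congr 1
          simp only [hcnt, Finset.card_filter]
          rw [Finset.sum_comm]
      _ = ∑ p ∈ (G (j:ℕ)) ×ˢ (G (j':ℕ)),
            (Finset.univ.filter (fun h : Fin n → Fin t => h p.1 = h p.2)).card * t := by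
          rw [Finset.sum_mul]
      _ = ∑ _p ∈ (G (j:ℕ)) ×ˢ (G (j':ℕ)), t ^ n := by
          refine Finset.sum_congr rfl fun p hp => ?_
          exact card_collision n t p.1 p.2 (hne p hp)
      _ = (G (j:ℕ)).card * (G (j':ℕ)).card * t ^ n := by
          rw [Finset.sum_const, smul_eq_mul, Finset.card_product]
  -- bad sets and their sizes
  set B : Fin q → Fin q → ℝ := fun j j' =>
    ((G (j:ℕ)).card : ℝ) * ((G (j':ℕ)).card : ℝ) * q ^ 2 / (t * δ₁) with hB
  set bad : Fin q → Fin q → Finset (Fin n → Fin t) := fun j j' =>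
    Finset.univ.filter (fun h => ¬ ((cnt j j' h : ℝ) ≤ B j j')) with hbad
  have hbadcard : ∀ j j' : Fin q, j ≠ j' →
      ((bad j j').card : ℝ) * q ^ 2 ≤ δ₁ * t ^ n := by
    intro j j' hjj
    have hq0 : 0 < q := j.pos
    by_cases ha : (G (j:ℕ)).card * (G (j':ℕ)).card = 0
    · -- one group empty: product empty, cnt ≡ 0, B = 0, bad empty
      have hprod : ((G (j:ℕ)) ×ˢ (G (j':ℕ))) = ∅ := by
        rw [← Finset.card_eq_zero, Finset.card_product]; exact ha
      have : bad j j' = ∅ := by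
        rw [Finset.eq_empty_iff_forall_notMem]
        intro h hh
        simp only [hbad, Finset.mem_filter, Finset.mem_univ, true_and] at hh
        apply hh
        have hc : cnt j j' h = 0 := by simp [hcnt, hprod]
        have hB0 : B j j' = 0 := by
          rcases Nat.mul_eq_zero.mp ha with h0 | h0 <;> simp [hB, h0]
        rw [hc, hB0]; norm_num
      rw [this]
      simp only [Finset.card_empty, Nat.cast_zero, zero_mul]
      positivity
    · have hapos : 0 < ((G (j:ℕ)).card : ℝ) * ((G (j':ℕ)).card : ℝ) := by
        have := Nat.pos_of_ne_zero ha
        have : 0 < (((G (j:ℕ)).card * (G (j':ℕ)).card : ℕ) : ℝ) := by exact_mod_cast this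
        simpa [Nat.cast_mul] using this
      have htδ : (0 : ℝ) < t * δ₁ := by positivity
      -- Markov: card * B ≤ total sum
      have hmarkov : ((bad j j').card : ℝ) * B j j' ≤ ∑ h : Fin n → Fin t, (cnt j j' h : ℝ) := by
        calc ((bad j j').card : ℝ) * B j j' = ∑ _h ∈ bad j j', B j j' := by
              rw [Finset.sum_const, nsmul_eq_mul]
          _ ≤ ∑ h ∈ bad j j', (cnt j j' h : ℝ) := by
              refine Finset.sum_le_sum fun h hh => ?_
              simp only [hbad, Finset.mem_filter, Finset.mem_univ, true_and] at hh
              exact (not_le.mp hh).le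
          _ ≤ ∑ h : Fin n → Fin t, (cnt j j' h : ℝ) := by
              refine Finset.sum_le_sum_of_subset_of_nonneg (Finset.subset_univ _)
                fun h _ _ => Nat.cast_nonneg _
      have hsumR : (∑ h : Fin n → Fin t, (cnt j j' h : ℝ)) * t =
          ((G (j:ℕ)).card : ℝ) * ((G (j':ℕ)).card : ℝ) * t ^ n := by
        have := hsum j j' hjj
        exact_mod_cast congrArg (Nat.cast : ℕ → ℝ) this
      -- multiply Markov by t * δ₁
      have key : ((bad j j').card : ℝ) * (((G (j:ℕ)).card : ℝ) * ((G (j':ℕ)).card : ℝ)) * q ^ 2 ≤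
          ((G (j:ℕ)).card : ℝ) * ((G (j':ℕ)).card : ℝ) * (δ₁ * t ^ n) := by
        have h1 : ((bad j j').card : ℝ) * B j j' * (t * δ₁) ≤
            (∑ h : Fin n → Fin t, (cnt j j' h : ℝ)) * (t * δ₁) :=
          mul_le_mul_of_nonneg_right hmarkov htδ.le
        have hB' : B j j' * (t * δ₁) =
            ((G (j:ℕ)).card : ℝ) * ((G (j':ℕ)).card : ℝ) * q ^ 2 :=
          div_mul_cancel₀ _ htδ.ne'
        have h2 : (∑ h : Fin n → Fin t, (cnt j j' h : ℝ)) * (t * δ₁) =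
            ((G (j:ℕ)).card : ℝ) * ((G (j':ℕ)).card : ℝ) * t ^ n * δ₁ := by
          rw [← mul_assoc, hsumR]
        calc ((bad j j').card : ℝ) * (((G (j:ℕ)).card : ℝ) * ((G (j':ℕ)).card : ℝ)) * q ^ 2
            = ((bad j j').card : ℝ) * (B j j' * (t * δ₁)) := by rw [hB']; ring
          _ = ((bad j j').card : ℝ) * B j j' * (t * δ₁) := by ring
          _ ≤ (∑ h : Fin n → Fin t, (cnt j j' h : ℝ)) * (t * δ₁) := h1
          _ = ((G (j:ℕ)).card : ℝ) * ((G (j':ℕ)).card : ℝ) * (δ₁ * t ^ n) := by rw [h2]; ring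
      have key2 : ((G (j:ℕ)).card : ℝ) * ((G (j':ℕ)).card : ℝ) * (((bad j j').card : ℝ) * q ^ 2) ≤
          ((G (j:ℕ)).card : ℝ) * ((G (j':ℕ)).card : ℝ) * (δ₁ * t ^ n) := by
        have : ((G (j:ℕ)).card : ℝ) * ((G (j':ℕ)).card : ℝ) * (((bad j j').card : ℝ) * q ^ 2) =
            ((bad j j').card : ℝ) * (((G (j:ℕ)).card : ℝ) * ((G (j':ℕ)).card : ℝ)) * q ^ 2 := by
          ring
        rw [this]; exact key
      exact le_of_mul_le_mul_left key2 hapos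
  -- the good predicate
  set P : (Fin n → Fin t) → Prop := fun h =>
    ∀ j j' : Fin q, j ≠ j' →
      (Nat.card {m : Fin t //
          (∃ i ∈ grp U (j : ℕ), h i = m) ∧ (∃ i' ∈ grp U (j' : ℕ), h i' = m)} : ℝ) ≤
        (grp U (j : ℕ)).ncard * (grp U (j' : ℕ)).ncard * q ^ 2 / (t * δ₁) with hP
  -- bad functions are covered by the union of the bad sets
  have hcover : Finset.univ.filter (fun h => ¬ P h) ⊆
      (Finset.univ : Finset (Fin q × Fin q)).biUnion
        (fun p => if p.1 ≠ p.2 then bad p.1 p.2 else ∅) := by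
    intro h hh
    simp only [Finset.mem_filter, Finset.mem_univ, true_and, hP] at hh
    push_neg at hh
    obtain ⟨j, j', hjj, hgt⟩ := hh
    refine Finset.mem_biUnion.mpr ⟨(j, j'), Finset.mem_univ _, ?_⟩
    simp only [hjj, if_true, ne_eq, not_false_iff]
    simp only [hbad, Finset.mem_filter, Finset.mem_univ, true_and, not_le]
    calc B j j' = (grp U (j : ℕ)).ncard * (grp U (j' : ℕ)).ncard * q ^ 2 / (t * δ₁) := by
          rw [hB, hGcard, hGcard]
      _ < (Nat.card {m : Fin t //
            (∃ i ∈ grp U (j : ℕ), h i = m) ∧ (∃ i' ∈ grp U (j' : ℕ), h i' = m)} : ℝ) := hgt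
      _ ≤ (cnt j j' h : ℝ) := by exact_mod_cast hbucket j j' h
  -- union bound
  have hbadAll : ((Finset.univ.filter (fun h => ¬ P h)).card : ℝ) ≤ δ₁ * t ^ n := by
    rcases Nat.eq_zero_or_pos q with hq0 | hq0
    · have : Finset.univ.filter (fun h => ¬ P h) = ∅ := by
        rw [Finset.eq_empty_iff_forall_notMem]
        intro h hh
        simp only [Finset.mem_filter, Finset.mem_univ, true_and, hP] at hh
        exact hh (fun j _ _ => (Fin.pos j).ne' (hq0 ▸ rfl) |>.elim)
      rw [this]; simp; positivity
    · have hq2 : (0 : ℝ) < (q : ℝ) ^ 2 := by positivity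
      have h1 : ((Finset.univ.filter (fun h => ¬ P h)).card : ℝ) ≤
          ∑ p : Fin q × Fin q,
            (((if p.1 ≠ p.2 then bad p.1 p.2 else ∅) : Finset (Fin n → Fin t)).card : ℝ) := by
        have := Finset.card_le_card hcover
        have h2 := Finset.card_biUnion_le (s := (Finset.univ : Finset (Fin q × Fin q)))
          (t := fun p => if p.1 ≠ p.2 then bad p.1 p.2 else ∅)
        have h3 : ((Finset.univ.filter (fun h => ¬ P h)).card : ℕ) ≤
            ∑ p : Fin q × Fin q, ((if p.1 ≠ p.2 then bad p.1 p.2 else ∅) :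
              Finset (Fin n → Fin t)).card := le_trans this h2
        exact_mod_cast h3
      have h4 : ∀ p : Fin q × Fin q,
          (((if p.1 ≠ p.2 then bad p.1 p.2 else ∅) : Finset (Fin n → Fin t)).card : ℝ) ≤
            δ₁ * t ^ n / q ^ 2 := by
        intro p
        by_cases hp : p.1 ≠ p.2
        · rw [if_pos hp, le_div_iff₀ hq2]
          exact hbadcard p.1 p.2 hp
        · rw [if_neg hp]
          simp only [Finset.card_empty, Nat.cast_zero]
          positivity
      calc ((Finset.univ.filter (fun h => ¬ P h)).card : ℝ)
          ≤ ∑ p : Fin q × Fin q,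
            (((if p.1 ≠ p.2 then bad p.1 p.2 else ∅) : Finset (Fin n → Fin t)).card : ℝ) := h1
        _ ≤ ∑ _p : Fin q × Fin q, δ₁ * t ^ n / q ^ 2 :=
            Finset.sum_le_sum fun p _ => h4 p
        _ = (q * q : ℝ) * (δ₁ * t ^ n / q ^ 2) := by
            rw [Finset.sum_const, nsmul_eq_mul, Finset.card_univ, Fintype.card_prod]
            simp only [Fintype.card_fin]
            push_cast
            ring
        _ = δ₁ * t ^ n := by
            field_simp
    -- conclude
  have hcardP : Nat.card {h : Fin n → Fin t // P h} = (Finset.univ.filter P).card := by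
    rw [Nat.card_eq_fintype_card, Fintype.card_subtype]
  have hsplit : (Finset.univ.filter P).card + (Finset.univ.filter (fun h => ¬ P h)).card =
      Fintype.card (Fin n → Fin t) := by
    rw [Finset.card_filter_add_card_filter_not, Finset.card_univ]
  have hΩ : (Fintype.card (Fin n → Fin t) : ℝ) = (t : ℝ) ^ n := by
    simp [Fintype.card_fun]
  rw [show Nat.card {h : Fin n → Fin t //
        ∀ j j' : Fin q, j ≠ j' →
          (Nat.card {m : Fin t //
              (∃ i ∈ grp U (j : ℕ), h i = m) ∧ (∃ i' ∈ grp U (j' : ℕ), h i' = m)} : ℝ) ≤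
            (grp U (j : ℕ)).ncard * (grp U (j' : ℕ)).ncard * q ^ 2 / (t * δ₁)} =
      (Finset.univ.filter P).card from hcardP]
  have := hbadAll
  have hsplit' : ((Finset.univ.filter P).card : ℝ) +
      ((Finset.univ.filter (fun h => ¬ P h)).card : ℝ) = (t : ℝ) ^ n := by
    rw [← hΩ]; exact_mod_cast hsplit
  rw [hΩ]
  nlinarith [pow_pos (show (0:ℝ) < t by exact_mod_cast ht) n]
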